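/- Let B be a unital C*-algebra and a ∈ B with 0 ≤ a ≤ 1, and suppose there exists x ∈ B with x*·a·x = 1. Then there exists an integer N > 0, depending only on ‖x‖ (not on B or a), and an element y ∈ B with ‖y‖ ≤ 1, such that y*·f_N(a)·y = 1, where f_N is the continuous function on [0,1] equal to 0 on [0, 1/(N+1)], equal to 1 on [1/N, 1], and linear in between. In particular f_N(a) is full in B. -/

import Mathlib

open scoped ENNReal MultiplierAlgebra

/-- An element `b` of a topological ring is *full* if the closure of the two-sided ideal
it generates is the whole ring. -/
def IsFullIn {A : Type*} [NonUnitalNonAssocRing A] [TopologicalSpace A] (b : A) : Prop :=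
  closure ((TwoSidedIdeal.span {b} : TwoSidedIdeal A) : Set A) = Set.univ

/-- Property (P1): every full element `b` admits `x, y` with `x * b * y = 1`. -/
def PropP1 (B : Type*) [Ring B] [TopologicalSpace B] : Prop :=
  ∀ b : B, IsFullIn b → ∃ x y : B, x * b * y = 1

/-- The piecewise-linear function `f_n` : `0` on `[0, 1/(n+1)]`, `1` on `[1/n, ∞)`,
linear in between. -/
noncomputable def fcut (n : ℕ) (t : ℝ) : ℝ := min 1 (max 0 ((n * (n + 1) : ℝ) * t - n))

lemma fcut_nonneg (n : ℕ) (t : ℝ) : 0 ≤ fcut n t := by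
  unfold fcut
  rcases le_total (1:ℝ) (max 0 ((n * (n + 1) : ℝ) * t - n)) with h | h
  · rw [min_eq_left h]; norm_num
  · rw [min_eq_right h]; exact le_max_left _ _

lemma fcut_le_one (n : ℕ) (t : ℝ) : fcut n t ≤ 1 := min_le_left _ _

@[fun_prop]
lemma fcut_continuous (n : ℕ) : Continuous (fcut n) := by
  unfold fcut; fun_prop

lemma fcut_eq_one {n : ℕ} {t : ℝ} (hn : 0 < n) (h : 1 / n ≤ t) : fcut n t = 1 := by
  have hn' : (0:ℝ) < n := by exact_mod_cast hn
  have : (1:ℝ) ≤ (n * (n + 1) : ℝ) * t - n := by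
    have h2 : (n:ℝ) * ((n:ℝ) + 1) * (1 / n) ≤ (n * (n + 1) : ℝ) * t := by
      apply mul_le_mul_of_nonneg_left h (by positivity)
    rw [mul_one_div, mul_comm, mul_div_assoc, div_self hn'.ne', mul_one] at h2
    linarith
  unfold fcut
  rw [max_eq_right (by linarith), min_eq_left this]

lemma fcut_eq_zero {n : ℕ} {t : ℝ} (h : t ≤ 1 / (n + 1)) : fcut n t = 0 := by
  have hn' : (0:ℝ) < (n:ℝ) + 1 := by positivity
  have : (n * (n + 1) : ℝ) * t - n ≤ 0 := by
    have h2 : (n * (n + 1) : ℝ) * t ≤ (n:ℝ) * ((n:ℝ) + 1) * (1 / ((n:ℝ)+1)) := by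
      apply mul_le_mul_of_nonneg_left h (by positivity)
    rw [mul_one_div, mul_div_assoc, div_self hn'.ne', mul_one] at h2
    linarith
  unfold fcut
  rw [max_eq_left this, min_eq_right (by norm_num)]

lemma fcut_succ_eq_one {n : ℕ} {t : ℝ} (h : 1 / ((n:ℝ) + 1) ≤ t) : fcut (n + 1) t = 1 := by
  have := fcut_eq_one (n := n + 1) (t := t) (Nat.succ_pos n) ?_
  · exact this
  · push_cast; exact h

lemma fcut_sandwich (n : ℕ) (t : ℝ) :
    Real.sqrt (fcut n t) * fcut (n + 1) t * Real.sqrt (fcut n t) = fcut n t := by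
  rcases le_or_gt t (1 / ((n:ℝ) + 1)) with h | h
  · rw [fcut_eq_zero (by exact_mod_cast h), Real.sqrt_zero]; ring
  · rw [fcut_succ_eq_one h.le, mul_one, Real.mul_self_sqrt (fcut_nonneg n t)]

lemma fcut_bound {n : ℕ} (hn : 0 < n) {t : ℝ} (ht : 0 ≤ t) :
    |t - t * fcut n t| ≤ 1 / n := by
  have hn' : (0:ℝ) < n := by exact_mod_cast hn
  rcases le_or_gt (1 / (n:ℝ)) t with h | h
  · rw [fcut_eq_one hn h, mul_one, sub_self, abs_zero]; positivity
  · have h1 : 0 ≤ t - t * fcut n t := by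
      nlinarith [fcut_le_one n t, fcut_nonneg n t]
    rw [abs_of_nonneg h1]
    nlinarith [fcut_nonneg n t]

universe u

/-- if `0 ≤ a ≤ 1` and `star x * a * x = 1` then for some `N` depending only
on `‖x‖` there is a contraction `y` with `star y * f_N(a) * y = 1`; in particular `f_N(a)`
is full. -/
theorem stmt6 (r : ℝ) :
    ∃ N : ℕ, 0 < N ∧
      ∀ (B : Type u) [CStarAlgebra B] [PartialOrder B] [StarOrderedRing B],
        ∀ a x : B, 0 ≤ a → a ≤ 1 → star x * a * x = 1 → ‖x‖ ≤ r →
          (∃ y : B, ‖y‖ ≤ 1 ∧ star y * cfc (fcut N) a * y = 1) ∧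
          IsFullIn (cfc (fcut N) a) := by
  refine ⟨⌊r ^ 2⌋₊ + 1 + 1, Nat.succ_pos _, ?_⟩
  set n : ℕ := ⌊r ^ 2⌋₊ + 1 with hn_def
  intro B _ _ _ a x ha ha1 hx hxr
  have hn : 0 < n := Nat.succ_pos _
  have hn' : (0:ℝ) < n := by exact_mod_cast hn
  have hr2 : r ^ 2 < (n:ℝ) := by
    have := Nat.lt_floor_add_one (r ^ 2)
    rw [hn_def]; push_cast; linarith
  have hr0 : 0 ≤ r := le_trans (norm_nonneg x) hxr
  have hsa : IsSelfAdjoint a := ha.isSelfAdjoint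
  have hspec : ∀ t ∈ spectrum ℝ a, 0 ≤ t := fun t ht => spectrum_nonneg_of_nonneg ha ht
  -- elements
  set sa : B := cfc Real.sqrt a with hsa_def
  set b : B := cfc (fcut n) a with hb_def
  set b' : B := cfc (fcut (n + 1)) a with hb'_def
  set sb : B := cfc (fun t => Real.sqrt (fcut n t)) a with hsb_def
  set c : B := cfc (fun t : ℝ => t * fcut n t) a with hc_def
  set d : B := star x * c * x with hd_def
  -- nonnegativity / selfadjointness
  have hsa0 : 0 ≤ sa := cfc_nonneg fun t ht => Real.sqrt_nonneg t
  have hb0 : 0 ≤ b := cfc_nonneg fun t ht => fcut_nonneg n t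
  have hsb0 : 0 ≤ sb := cfc_nonneg fun t ht => Real.sqrt_nonneg _
  have hc0 : 0 ≤ c := cfc_nonneg fun t ht => mul_nonneg (hspec t ht) (fcut_nonneg n t)
  have hd0 : 0 ≤ d := star_left_conjugate_nonneg hc0 x
  -- key1 : sa * b * sa = c
  have key1 : sa * b * sa = c := by
    rw [hsa_def, hb_def, ← cfc_mul _ _ a, ← cfc_mul _ _ a, hc_def]
    exact cfc_congr fun t ht => by
      have h2 : Real.sqrt t * Real.sqrt t = t := Real.mul_self_sqrt (hspec t ht)
      nlinarith [fcut_nonneg n t]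
  -- norm bound
  have hnorm : ‖1 - d‖ < 1 := by
    have hac : a - c = cfc (fun t : ℝ => t - t * fcut n t) a := by
      rw [hc_def, cfc_sub _ _ a, cfc_id' ℝ a]
    have h1d : 1 - d = star x * (a - c) * x := by
      rw [hd_def, ← hx]; noncomm_ring
    have hm : ‖a - c‖ ≤ 1 / n := by
      rw [hac]
      exact norm_cfc_le (by positivity) fun t ht => by
        rw [Real.norm_eq_abs]; exact fcut_bound hn (hspec t ht)
    calc ‖1 - d‖ = ‖star x * (a - c) * x‖ := by rw [h1d]
      _ ≤ ‖star x * (a - c)‖ * ‖x‖ := norm_mul_le _ _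
      _ ≤ ‖star x‖ * ‖a - c‖ * ‖x‖ := by
          gcongr; exact norm_mul_le _ _
      _ = ‖x‖ * ‖a - c‖ * ‖x‖ := by rw [norm_star]
      _ ≤ r * (1 / n) * r := by gcongr
      _ < 1 := by
          rw [mul_one_div, div_mul_eq_mul_div, div_lt_one hn']
          nlinarith
  have hdu : IsUnit d := by
    have h := (Units.oneSub (1 - d) hnorm).isUnit
    simpa using h
  have hdspec : ∀ t ∈ spectrum ℝ d, 0 < t := by
    intro t ht
    refine lt_of_le_of_ne (spectrum_nonneg_of_nonneg hd0 ht) fun h0 => ?_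
    exact (spectrum.zero_notMem_iff ℝ).mpr hdu (h0 ▸ ht)
  have hconts : ContinuousOn (fun t : ℝ => (Real.sqrt t)⁻¹) (spectrum ℝ d) := by
    apply ContinuousOn.inv₀ Real.continuous_sqrt.continuousOn
    intro t ht
    have := hdspec t ht
    positivity
  set s : B := cfc (fun t : ℝ => (Real.sqrt t)⁻¹) d with hs_def
  have hs0 : 0 ≤ s := cfc_nonneg fun t ht => by positivity
  -- key2 : s * d * s = 1
  have hdsa : IsSelfAdjoint d := hd0.isSelfAdjoint
  have hid : ContinuousOn (fun t : ℝ => t) (spectrum ℝ d) := by fun_prop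
  have key2 : s * d * s = 1 := by
    nth_rewrite 1 [← cfc_id' ℝ d hdsa]
    rw [hs_def, ← cfc_mul _ _ d hconts hid,
      ← cfc_mul (fun t : ℝ => (Real.sqrt t)⁻¹ * t) _ d (hconts.mul hid) hconts, ← cfc_one ℝ d hdsa]
    exact cfc_congr fun t ht => by
      have h2 : Real.sqrt t * Real.sqrt t = t := Real.mul_self_sqrt (hdspec t ht).le
      have h3 : Real.sqrt t ≠ 0 := ne_of_gt (Real.sqrt_pos.mpr (hdspec t ht))
      simp only [Pi.one_apply]
      field_simp
      rw [sq, h2]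
  -- key3 : sb * b' * sb = b
  have key3 : sb * b' * sb = b := by
    rw [hsb_def, hb'_def, ← cfc_mul _ _ a, ← cfc_mul _ _ a, hb_def]
    exact cfc_congr fun t ht => fcut_sandwich n t
  -- key4 : sb * sb = b
  have key4 : sb * sb = b := by
    rw [hsb_def, ← cfc_mul _ _ a, hb_def]
    exact cfc_congr fun t ht => Real.mul_self_sqrt (fcut_nonneg n t)
  -- the element y
  set y : B := sb * (sa * (x * s)) with hy_def
  have expand : ∀ m : B, star y * m * y = s * (star x * (sa * (sb * m * sb) * sa) * x) * s := by
    intro m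
    rw [hy_def]
    simp only [star_mul, hs0.isSelfAdjoint.star_eq, hsa0.isSelfAdjoint.star_eq,
      hsb0.isSelfAdjoint.star_eq, mul_assoc]
  have hyby : star y * b' * y = 1 := by
    rw [expand b', key3, key1, ← hd_def, key2]
  have hyy : star y * y = 1 := by
    have h1 : star y * y = star y * (1:B) * y := by rw [mul_one]
    rw [h1, expand 1, mul_one, key4, key1, ← hd_def, key2]
  -- norm of y
  have hnorm1 : ‖(1:B)‖ ≤ 1 := by
    have h11 : ‖(1:B)‖ * ‖(1:B)‖ = ‖(1:B)‖ := by
      rw [← CStarRing.norm_star_mul_self (x := (1:B)), star_one, one_mul]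
    nlinarith [norm_nonneg (1:B)]
  have hyn : ‖y‖ ≤ 1 := by
    have h2 : ‖y‖ * ‖y‖ = ‖(1:B)‖ := by
      rw [← CStarRing.norm_star_mul_self (x := y), hyy]
    nlinarith [norm_nonneg y]
  refine ⟨⟨y, hyn, hyby⟩, ?_⟩
  -- fullness
  show IsFullIn b'
  unfold IsFullIn
  have h1mem : (1:B) ∈ TwoSidedIdeal.span {b'} := by
    rw [← hyby]
    exact TwoSidedIdeal.mul_mem_right _ _ _
      (TwoSidedIdeal.mul_mem_left _ _ _ (TwoSidedIdeal.subset_span rfl))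
  have huniv : ((TwoSidedIdeal.span {b'} : TwoSidedIdeal B) : Set B) = Set.univ := by
    apply Set.eq_univ_of_forall
    intro z
    simpa using TwoSidedIdeal.mul_mem_left _ z 1 h1mem
  rw [huniv, closure_univ]
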